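/- Let 1 ≤ k2, k1 = t1 with t1 ≤ min(n1, m), t2 = m with k2 ≤ t2 ≤ n2, and m < t1·t2. Let g1 ∈ L^{n1} with wt_R(g1) = t1 and g2 ∈ L^{n2} with wt_R(g2) = t2 = m, and let C be the row space of Moore(g1,k1) ⊗ Moore(g2,k2). Let r be a natural number with 2r ≤ t2 − k2. Then for every vector y indexed by {1..n1}×{1..n2} with entries in L and all codewords c, c' ∈ C with wt_R(y − c) ≤ r and wt_R(y − c') ≤ r, one has c = c'. (That is, the extended Gabidulin–Kronecker product code corrects every error of rank weight at most ⌊(t2 − k2)/2⌋ uniquely.) -/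
import Mathlib

open Matrix Kronecker Polynomial

/-- A nonzero q-polynomial of q-degree < k has at most `q^(k-1)` roots;
hence if it vanishes on a large finite set, all coefficients are zero. -/
lemma qpoly_eq_zero_of_roots {L : Type*} [Field L] {q k : ℕ} (hq : 2 ≤ q) (hk : 1 ≤ k)
    (a : Fin k → L) (S : Finset L) (hS : q ^ (k - 1) < S.card)
    (hroot : ∀ z ∈ S, ∑ i : Fin k, a i * z ^ q ^ (i : ℕ) = 0) : ∀ i, a i = 0 := by
  classical
  set P : L[X] := ∑ i : Fin k, C (a i) * X ^ (q ^ (i : ℕ)) with hP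
  have hcoeff : ∀ j : Fin k, P.coeff (q ^ (j : ℕ)) = a j := by
    intro j
    rw [hP, finset_sum_coeff]
    rw [Finset.sum_eq_single j]
    · simp
    · intro i _ hij
      rw [coeff_C_mul, coeff_X_pow, if_neg, mul_zero]
      exact fun h => hij (Fin.ext (Nat.pow_right_injective hq h.symm))
    · simp
  by_contra hcon
  push_neg at hcon
  obtain ⟨j, hj⟩ := hcon
  have hPne : P ≠ 0 := by
    intro h
    apply hj
    rw [← hcoeff j, h, coeff_zero]
  have hdeg : P.natDegree ≤ q ^ (k - 1) := by
    rw [hP]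
    refine natDegree_sum_le_of_forall_le _ _ fun i _ => ?_
    refine le_trans (natDegree_C_mul_le _ _) ?_
    rw [natDegree_X_pow]
    exact Nat.pow_le_pow_right (by omega) (by omega)
  have hsub : S ⊆ P.roots.toFinset := by
    intro z hz
    rw [Multiset.mem_toFinset, mem_roots hPne]
    have := hroot z hz
    simp only [IsRoot, hP, eval_finset_sum, eval_mul, eval_C, eval_pow, eval_X]
    exact this
  have := Finset.card_le_card hsub
  have h2 := Multiset.toFinset_card_le P.roots
  have h3 := P.card_roots'
  omega

/-- The `K`-linear map `z ↦ ∑ i, a i * z ^ q ^ i` on `L`. -/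
noncomputable def qpolyMap (K : Type*) {L : Type*} [Field K] [Fintype K] [Field L] [Algebra K L]
    {q k p e : ℕ} [Fact p.Prime] [CharP L p] (hq : Fintype.card K = q) (hpe : q = p ^ e)
    (a : Fin k → L) : L →ₗ[K] L where
  toFun z := ∑ i : Fin k, a i * z ^ q ^ (i : ℕ)
  map_add' x y := by
    have h : ∀ i : ℕ, (x + y) ^ q ^ i = x ^ q ^ i + y ^ q ^ i := by
      intro i
      subst hpe
      simp only [← pow_mul]; rw [add_pow_char_pow]
    simp only [h, mul_add, Finset.sum_add_distrib]
  map_smul' c z := by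
    have hc : ∀ i : ℕ, c ^ q ^ i = c := by
      intro i; rw [← hq]; exact FiniteField.pow_card_pow i c
    simp only [RingHom.id_apply, Algebra.smul_def, mul_pow, ← map_pow, hc, Finset.mul_sum]
    exact Finset.sum_congr rfl fun i _ => by ring

@[simp] lemma qpolyMap_apply (K : Type*) {L : Type*} [Field K] [Fintype K] [Field L] [Algebra K L]
    {q k p e : ℕ} [Fact p.Prime] [CharP L p] (hq : Fintype.card K = q) (hpe : q = p ^ e)
    (a : Fin k → L) (z : L) :
    qpolyMap K hq hpe a z = ∑ i : Fin k, a i * z ^ q ^ (i : ℕ) := rfl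

/-- Rank weight of a vector over the extension `L` of the base field `K`. -/
noncomputable def rankWeight (K : Type*) {L : Type*} [Field K] [Field L] [Algebra K L]
    {ι : Type*} (v : ι → L) : ℕ :=
  Module.finrank K (Submodule.span K (Set.range v))

/-- The `k × n` Moore matrix of `g`: entry `(i, j)` is `g j ^ q ^ i`. -/
def moore (q : ℕ) {L : Type*} [Field L] {n : ℕ} (g : Fin n → L) (k : ℕ) :
    Matrix (Fin k) (Fin n) L :=
  Matrix.of fun i j => g j ^ q ^ (i : ℕ)

theorem egk_unique_decoding_case1
    (q m n1 k1 n2 k2 t1 t2 r : ℕ)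
    (K L : Type*) [Field K] [Fintype K] [Field L] [Algebra K L]
    (hq : Fintype.card K = q) (hm : Module.finrank K L = m)
    (hk2pos : 1 ≤ k2) (hk1t1 : k1 = t1) (ht1 : t1 ≤ min n1 m)
    (ht2m : t2 = m) (hk2t2 : k2 ≤ t2) (ht2n2 : t2 ≤ n2) (hmt : m < t1 * t2)
    (g1 : Fin n1 → L) (hg1 : rankWeight K g1 = t1)
    (g2 : Fin n2 → L) (hg2 : rankWeight K g2 = t2)
    (hr : 2 * r ≤ t2 - k2) :
    ∀ y c c' : Fin n1 × Fin n2 → L,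
      (∃ x : Fin k1 × Fin k2 → L, c = x ᵥ* (moore q g1 k1 ⊗ₖ moore q g2 k2)) →
      (∃ x : Fin k1 × Fin k2 → L, c' = x ᵥ* (moore q g1 k1 ⊗ₖ moore q g2 k2)) →
      rankWeight K (y - c) ≤ r → rankWeight K (y - c') ≤ r → c = c' := by
  classical
  rintro y c c' ⟨x, hc⟩ ⟨x', hc'⟩ hyc hyc'
  -- basic numerics
  have hm1 : 0 < m := lt_of_lt_of_le hk2pos (ht2m ▸ hk2t2)
  have hq2 : 2 ≤ q := hq ▸ Fintype.one_lt_card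
  have ht1pos : 0 < t1 := by
    rcases Nat.eq_zero_or_pos t1 with h | h
    · simp [h] at hmt
    · exact h
  have hk1pos : 1 ≤ k1 := by omega
  -- finiteness of L
  haveI : FiniteDimensional K L := Module.finite_of_finrank_pos (hm ▸ hm1)
  haveI : Finite L := Module.finite_of_finite K
  haveI : Fintype L := Fintype.ofFinite L
  -- characteristic
  set p := ringChar K with hpdef
  haveI : CharP K p := ringChar.charP K
  have hp : p.Prime := CharP.char_is_prime K p
  haveI : Fact p.Prime := ⟨hp⟩
  haveI : CharP L p := charP_of_injective_algebraMap (algebraMap K L).injective p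
  obtain ⟨e, -, hpe⟩ := FiniteField.card K p
  rw [hq] at hpe
  -- the difference codeword
  set x'' : Fin k1 × Fin k2 → L := x - x' with hx''
  have hd : c - c' = x'' ᵥ* (moore q g1 k1 ⊗ₖ moore q g2 k2) := by
    rw [hc, hc', hx'', Matrix.sub_vecMul]
  have hdentry : ∀ j1 j2, (c - c') (j1, j2) =
      ∑ i1 : Fin k1, ∑ i2 : Fin k2,
        x'' (i1, i2) * (g1 j1 ^ q ^ (i1 : ℕ) * g2 j2 ^ q ^ (i2 : ℕ)) := by
    intro j1 j2
    have : (c - c') (j1, j2) = ∑ i : Fin k1 × Fin k2,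
        x'' i * (g1 j1 ^ q ^ (i.1 : ℕ) * g2 j2 ^ q ^ (i.2 : ℕ)) := by
      rw [hd]
      simp [Matrix.vecMul, dotProduct, Matrix.kroneckerMap_apply, moore]
    rw [this, Fintype.sum_prod_type]
  -- the ambient small space containing all entries of c - c'
  set V : Submodule K L :=
    Submodule.span K (Set.range (y - c)) ⊔ Submodule.span K (Set.range (y - c')) with hV
  have hdV : ∀ j1 j2, (c - c') (j1, j2) ∈ V := by
    intro j1 j2
    have h1 : (y - c') (j1, j2) ∈ V :=
      Submodule.mem_sup_right (Submodule.subset_span ⟨(j1, j2), rfl⟩)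
    have h2 : (y - c) (j1, j2) ∈ V :=
      Submodule.mem_sup_left (Submodule.subset_span ⟨(j1, j2), rfl⟩)
    have : (c - c') (j1, j2) = (y - c') (j1, j2) - (y - c) (j1, j2) := by
      simp [Pi.sub_apply]
    rw [this]
    exact sub_mem h1 h2
  have hVrank : Module.finrank K V ≤ m - k2 := by
    have := Submodule.finrank_sup_add_finrank_inf_eq
      (Submodule.span K (Set.range (y - c))) (Submodule.span K (Set.range (y - c')))
    have h1 : rankWeight K (y - c) = Module.finrank K (Submodule.span K (Set.range (y - c))) := rfl
    have h2 : rankWeight K (y - c') =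
        Module.finrank K (Submodule.span K (Set.range (y - c'))) := rfl
    rw [hV]
    omega
  -- span of g2 is everything
  have hg2top : Submodule.span K (Set.range g2) = ⊤ := by
    apply Submodule.eq_top_of_finrank_eq
    rw [hm, ← ht2m, ← hg2]; rfl
  -- Step 1: inner coefficients vanish
  have key1 : ∀ (j1 : Fin n1) (i2 : Fin k2),
      ∑ i1 : Fin k1, x'' (i1, i2) * g1 j1 ^ q ^ (i1 : ℕ) = 0 := by
    intro j1
    set a : Fin k2 → L := fun i2 => ∑ i1 : Fin k1, x'' (i1, i2) * g1 j1 ^ q ^ (i1 : ℕ) with ha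
    set φ : L →ₗ[K] L := qpolyMap K hq hpe a with hφ
    have hφg2 : ∀ j2, φ (g2 j2) = (c - c') (j1, j2) := by
      intro j2
      rw [hφ, qpolyMap_apply, hdentry j1 j2, ha]
      rw [Finset.sum_comm]
      exact Finset.sum_congr rfl fun i2 _ => by
        rw [Finset.sum_mul]
        exact Finset.sum_congr rfl fun i1 _ => by ring
    have hrange : LinearMap.range φ ≤ V := by
      rintro _ ⟨z, rfl⟩
      have hz : z ∈ Submodule.span K (Set.range g2) := by rw [hg2top]; trivial
      induction hz using Submodule.span_induction with
      | mem w hw => obtain ⟨j2, rfl⟩ := hw; rw [hφg2]; exact hdV j1 j2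
      | zero => simp
      | add u v _ _ hu hv => rw [map_add]; exact add_mem hu hv
      | smul t u _ hu => rw [_root_.map_smul]; exact Submodule.smul_mem _ _ hu
    have hkerrank : k2 ≤ Module.finrank K (LinearMap.ker φ) := by
      have h1 := LinearMap.finrank_range_add_finrank_ker φ
      have h2 : Module.finrank K (LinearMap.range φ) ≤ Module.finrank K V :=
        Submodule.finrank_mono hrange
      rw [hm] at h1
      omega
    have hcard : Fintype.card (LinearMap.ker φ) = q ^ Module.finrank K (LinearMap.ker φ) := by
      rw [← hq]; exact Module.card_eq_pow_finrank
    have ha0 : ∀ i2, a i2 = 0 := by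
      apply qpoly_eq_zero_of_roots hq2 hk2pos a ((LinearMap.ker φ : Set L).toFinset)
      · rw [Set.toFinset_card]
        calc q ^ (k2 - 1) < q ^ k2 := Nat.pow_lt_pow_right (by omega) (by omega)
        _ ≤ q ^ Module.finrank K (LinearMap.ker φ) := Nat.pow_le_pow_right (by omega) hkerrank
        _ = Fintype.card (LinearMap.ker φ) := hcard.symm
      · intro z hz
        rw [Set.mem_toFinset] at hz
        have : φ z = 0 := hz
        rw [hφ, qpolyMap_apply] at this
        exact this
    intro i2
    have := ha0 i2
    rw [ha] at this
    exact this
  -- Step 2: all of x'' vanishes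
  have key2 : x'' = 0 := by
    funext i
    obtain ⟨i1, i2⟩ := i
    set b : Fin k1 → L := fun i1 => x'' (i1, i2) with hb
    set ψ : L →ₗ[K] L := qpolyMap K hq hpe b with hψ
    have hψg1 : ∀ j1, ψ (g1 j1) = 0 := by
      intro j1
      rw [hψ, qpolyMap_apply]
      exact key1 j1 i2
    have hker : Submodule.span K (Set.range g1) ≤ LinearMap.ker ψ := by
      rw [Submodule.span_le]
      rintro _ ⟨j1, rfl⟩
      exact hψg1 j1
    have hkerrank : k1 ≤ Module.finrank K (LinearMap.ker ψ) := by
      have := Submodule.finrank_mono hker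
      have hgg : Module.finrank K (Submodule.span K (Set.range g1)) = t1 := hg1
      omega
    have hcard : Fintype.card (LinearMap.ker ψ) = q ^ Module.finrank K (LinearMap.ker ψ) := by
      rw [← hq]; exact Module.card_eq_pow_finrank
    have hb0 : ∀ i1, b i1 = 0 := by
      apply qpoly_eq_zero_of_roots hq2 hk1pos b ((LinearMap.ker ψ : Set L).toFinset)
      · rw [Set.toFinset_card]
        calc q ^ (k1 - 1) < q ^ k1 := Nat.pow_lt_pow_right (by omega) (by omega)
        _ ≤ q ^ Module.finrank K (LinearMap.ker ψ) := Nat.pow_le_pow_right (by omega) hkerrank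
        _ = Fintype.card (LinearMap.ker ψ) := hcard.symm
      · intro z hz
        rw [Set.mem_toFinset] at hz
        have : ψ z = 0 := hz
        rw [hψ, qpolyMap_apply] at this
        exact this
    exact hb0 i1
  have : c - c' = 0 := by
    rw [hd, key2, Matrix.zero_vecMul]
  exact sub_eq_zero.mp this
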